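/- Let Λ = ℚ[t,t⁻¹] and H a finitely generated torsion Λ-module. Then Hom_Λ(H, Q(Λ)/Λ) and Hom_ℚ(H, ℚ) are isomorphic as ℚ-vector spaces. -/

import Mathlib

open LaurentPolynomial CategoryTheory

noncomputable section

/-- Λ = ℚ[t,t⁻¹], the ring of Laurent polynomials over ℚ. -/
abbrev Λ : Type := LaurentPolynomial ℚ

instance : IsDomain Λ := NoZeroDivisors.to_isDomain _

/-- `IsOrderIdeal M Δ` : `M` is a finitely generated torsion `Λ`-module, isomorphic to
`⊕ⱼ Λ/(pⱼ)` with all `pⱼ ≠ 0`, and `Δ` generates its order ideal, i.e. `Δ` is associated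
(equal up to units of `Λ`) to `∏ⱼ pⱼ`. -/
def IsOrderIdeal (M : Type*) [AddCommGroup M] [Module Λ M] (Δ : Λ) : Prop :=
  ∃ (n : ℕ) (p : Fin n → Λ), (∀ i, p i ≠ 0) ∧
    Nonempty (M ≃ₗ[Λ] Π i : Fin n, Λ ⧸ Ideal.span {p i}) ∧
    Associated Δ (∏ i, p i)

/-- The field of fractions Q(Λ) of Λ. -/
abbrev QΛ : Type := FractionRing Λ

/-- Λ viewed as a Λ-submodule of Q(Λ). -/
abbrev ΛinQΛ : Submodule Λ QΛ := LinearMap.range (Algebra.linearMap Λ QΛ)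

/-- The quotient Λ-module Q(Λ)/Λ. -/
abbrev QmodΛ : Type := QΛ ⧸ ΛinQΛ

/-- a ↦ [a/q] in QmodΛ -/
def psi (q : Λ) : Λ →ₗ[Λ] QmodΛ :=
  ΛinQΛ.mkQ ∘ₗ LinearMap.toSpanSingleton Λ QΛ (algebraMap Λ QΛ q)⁻¹

lemma psi_apply (q a : Λ) :
    psi q a = ΛinQΛ.mkQ (algebraMap Λ QΛ a * (algebraMap Λ QΛ q)⁻¹) := by
  simp [psi, LinearMap.toSpanSingleton_apply, Algebra.smul_def]

lemma algebraMap_q_ne (q : Λ) (hq : q ≠ 0) : algebraMap Λ QΛ q ≠ 0 := by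
  intro h
  exact hq (IsFractionRing.injective Λ QΛ (by rw [h, map_zero]))

lemma smul_div_eq_iff (q : Λ) (hq : q ≠ 0) (a b : Λ) :
    algebraMap Λ QΛ a * (algebraMap Λ QΛ q)⁻¹ = algebraMap Λ QΛ b ↔ a = b * q := by
  rw [← div_eq_mul_inv, div_eq_iff (algebraMap_q_ne q hq), ← map_mul]
  exact (IsFractionRing.injective Λ QΛ).eq_iff

lemma ker_psi (q : Λ) (hq : q ≠ 0) : LinearMap.ker (psi q) = Ideal.span {q} := by
  ext a
  simp only [LinearMap.mem_ker, psi_apply, Submodule.mkQ_apply, Submodule.Quotient.mk_eq_zero,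
    LinearMap.mem_range, Algebra.linearMap_apply, Ideal.mem_span_singleton]
  constructor
  · rintro ⟨b, hb⟩
    exact ⟨b, by rw [mul_comm]; exact (smul_div_eq_iff q hq a b).mp hb.symm⟩
  · rintro ⟨b, rfl⟩
    exact ⟨b, ((smul_div_eq_iff q hq _ b).mpr (mul_comm q b)).symm⟩

lemma psi_one (q : Λ) (hq : q ≠ 0) : psi q q = 0 := by
  rw [psi_apply, Submodule.mkQ_apply, Submodule.Quotient.mk_eq_zero]
  exact ⟨1, by rw [Algebra.linearMap_apply,
    ((smul_div_eq_iff q hq q 1).mpr (one_mul q).symm), map_one]⟩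

lemma smul_psi (q : Λ) (hq : q ≠ 0) (a : Λ) : q • psi q a = 0 := by
  rw [← map_smul, smul_eq_mul, mul_comm, ← smul_eq_mul, map_smul, psi_one q hq, smul_zero]

lemma exists_of_torsion (q : Λ) (hq : q ≠ 0) (x : QmodΛ) (hx : q • x = 0) :
    ∃ a, psi q a = x := by
  obtain ⟨y, rfl⟩ := ΛinQΛ.mkQ_surjective x
  rw [Submodule.mkQ_apply, ← Submodule.Quotient.mk_smul, Submodule.Quotient.mk_eq_zero] at hx
  obtain ⟨b, hb⟩ := hx
  refine ⟨b, ?_⟩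
  rw [psi_apply, Submodule.mkQ_apply, Submodule.mkQ_apply]
  congr 1
  rw [Algebra.linearMap_apply] at hb
  rw [eq_comm, eq_mul_inv_iff_mul_eq₀ (algebraMap_q_ne q hq), mul_comm, ← Algebra.smul_def, hb]

/-- evaluation at the class of 1 -/
def ev (q : Λ) : ((Λ ⧸ Ideal.span {q}) →ₗ[Λ] QmodΛ) →ₗ[Λ] QmodΛ :=
  LinearMap.applyₗ (Submodule.Quotient.mk 1)

lemma ev_inj (q : Λ) : Function.Injective (ev q) := by
  rw [← LinearMap.ker_eq_bot, LinearMap.ker_eq_bot']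
  intro φ hφ
  refine Submodule.linearMap_qext _ (LinearMap.ext fun r => ?_)
  have : (Submodule.Quotient.mk r : Λ ⧸ Ideal.span {q}) = r • Submodule.Quotient.mk 1 := by
    rw [← Submodule.Quotient.mk_smul, smul_eq_mul, mul_one]
  simp only [LinearMap.comp_apply, Submodule.mkQ_apply, this, map_smul]
  rw [show φ (Submodule.Quotient.mk 1) = 0 from hφ]
  simp

lemma range_ev (q : Λ) (hq : q ≠ 0) :
    LinearMap.range (ev q) = LinearMap.range (psi q) := by
  apply le_antisymm
  · rintro _ ⟨φ, rfl⟩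
    have hqx : q • (ev q φ) = 0 := by
      have : (ev q) φ = φ (Submodule.Quotient.mk 1) := rfl
      rw [this, ← map_smul]
      have : q • (Submodule.Quotient.mk 1 : Λ ⧸ Ideal.span {q}) = 0 := by
        rw [← Submodule.Quotient.mk_smul, smul_eq_mul, mul_one, Submodule.Quotient.mk_eq_zero]
        exact Ideal.mem_span_singleton_self q
      rw [this, map_zero]
    obtain ⟨a, ha⟩ := exists_of_torsion q hq _ hqx
    exact ⟨a, ha⟩
  · rintro _ ⟨b, rfl⟩
    have hker : Ideal.span {q} ≤ LinearMap.ker (b • psi q) := by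
      rw [← ker_psi q hq]
      intro x hx
      simp only [LinearMap.mem_ker] at hx ⊢
      rw [LinearMap.smul_apply, hx, smul_zero]
    refine ⟨Submodule.liftQ _ (b • psi q) hker, ?_⟩
    show Submodule.liftQ _ (b • psi q) hker (Submodule.Quotient.mk 1) = psi q b
    rw [Submodule.liftQ_apply, LinearMap.smul_apply, ← map_smul, smul_eq_mul, mul_one]

/-- the key equivalence Hom(Λ/(q), QΛ/Λ) ≃ Λ/(q) -/
def homEquiv (q : Λ) (hq : q ≠ 0) :
    ((Λ ⧸ Ideal.span {q}) →ₗ[Λ] QmodΛ) ≃ₗ[Λ] (Λ ⧸ Ideal.span {q}) :=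
  (LinearEquiv.ofInjective (ev q) (ev_inj q)).trans <|
    (LinearEquiv.ofEq _ _ (range_ev q hq)).trans <|
      ((Submodule.quotEquivOfEq _ _ (ker_psi q hq).symm).trans
        (psi q).quotKerEquivRange).symm

open Polynomial in
lemma exists_good_poly (q : Λ) (hq : q ≠ 0) :
    ∃ g : Polynomial ℚ, g ≠ 0 ∧ IsCoprime Polynomial.X g ∧
      Ideal.span {q} = Ideal.span {toLaurent g} := by
  obtain ⟨n, f, hf⟩ := LaurentPolynomial.exists_T_pow q
  have hf0 : f ≠ 0 := by
    intro h
    rw [h, map_zero] at hf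
    exact (mul_ne_zero hq (isUnit_T (n : ℤ)).ne_zero) hf.symm
  obtain ⟨k, g, hXg, hfg⟩ := WfDvdMonoid.max_power_factor hf0 Polynomial.irreducible_X
  have hg0 : g ≠ 0 := fun h => hf0 (by rw [hfg, h, mul_zero])
  have hc : g.coeff 0 ≠ 0 := fun h => hXg (Polynomial.X_dvd_iff.mpr h)
  refine ⟨g, hg0, ?_, ?_⟩
  · refine ⟨-Polynomial.C (g.coeff 0)⁻¹ * g.divX, Polynomial.C (g.coeff 0)⁻¹, ?_⟩
    have h := Polynomial.divX_mul_X_add g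
    have hcc : Polynomial.C (g.coeff 0)⁻¹ * Polynomial.C (g.coeff 0) = 1 := by
      rw [← Polynomial.C_mul, inv_mul_cancel₀ hc, Polynomial.C_1]
    linear_combination (-Polynomial.C (g.coeff 0)⁻¹) * h + hcc
  · rw [Ideal.span_singleton_eq_span_singleton]
    have h2 : q * T (n : ℤ) = T (k : ℤ) * toLaurent g := by
      rw [← hf, hfg, map_mul, Polynomial.toLaurent_X_pow]
    refine ⟨(isUnit_T ((n : ℤ) - k)).unit, ?_⟩
    rw [IsUnit.unit_spec]
    calc q * T ((n : ℤ) - k) = q * T (n : ℤ) * T (-(k : ℤ)) := by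
          rw [mul_T_assoc, ← sub_eq_add_neg]
      _ = T (k : ℤ) * toLaurent g * T (-(k : ℤ)) := by rw [h2]
      _ = toLaurent g * T (k : ℤ) * T (-(k : ℤ)) := by rw [T_mul]
      _ = toLaurent g := by rw [mul_T_assoc, add_neg_cancel, T_zero, mul_one]

open Polynomial in
lemma fd_quot_toLaurent (g : Polynomial ℚ) (hg : g ≠ 0) (hco : IsCoprime Polynomial.X g) :
    FiniteDimensional ℚ (Λ ⧸ Ideal.span {toLaurent g}) := by
  set I : Ideal Λ := Ideal.span {toLaurent g} with hI
  let ρ : Polynomial ℚ →ₐ[ℚ] Λ ⧸ I :=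
    (Ideal.Quotient.mkₐ ℚ I).comp (IsScalarTower.toAlgHom ℚ (Polynomial ℚ) Λ)
  have hρ : ∀ p : Polynomial ℚ, ρ p = Ideal.Quotient.mk I (toLaurent p) := fun p => rfl
  have hg_mem : Ideal.Quotient.mk I (toLaurent g) = 0 := by
    rw [Ideal.Quotient.eq_zero_iff_mem]
    exact Ideal.mem_span_singleton_self _
  obtain ⟨u, v, huv⟩ := hco
  have hu : Ideal.Quotient.mk I (T (-1)) = ρ u := by
    have hux : u * Polynomial.X = 1 - v * g := by linear_combination huv
    have h1 : ρ u * Ideal.Quotient.mk I (T 1) = 1 := by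
      calc ρ u * Ideal.Quotient.mk I (T 1)
          = Ideal.Quotient.mk I (toLaurent (u * Polynomial.X)) := by
            rw [hρ, map_mul Polynomial.toLaurent, Polynomial.toLaurent_X, map_mul]
        _ = 1 := by
            rw [hux, map_sub, map_one, map_mul Polynomial.toLaurent, map_sub, map_one,
              map_mul, hg_mem, mul_zero, sub_zero]
    calc Ideal.Quotient.mk I (T (-1))
        = Ideal.Quotient.mk I (T (-1)) * (ρ u * Ideal.Quotient.mk I (T 1)) := by
          rw [h1, mul_one]
      _ = ρ u * Ideal.Quotient.mk I (T (-1) * T 1) := by rw [map_mul]; ring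
      _ = ρ u := by
          rw [← T_add, neg_add_cancel, T_zero, map_one, mul_one]
  have hsurj : Function.Surjective ρ := by
    intro z
    obtain ⟨x, rfl⟩ := Ideal.Quotient.mk_surjective z
    induction x using LaurentPolynomial.induction_on_mul_T with
    | mul_T =>
      rename_i f n
      refine ⟨f * u ^ n, ?_⟩
      rw [map_mul, map_pow, hρ f, ← hu, ← map_pow, T_pow, mul_neg_one, ← map_mul]
  have hker : ∀ a ∈ Ideal.span {g}, ρ a = 0 := by
    intro a ha
    obtain ⟨b, rfl⟩ := Ideal.mem_span_singleton.mp ha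
    rw [hρ, map_mul Polynomial.toLaurent, map_mul, hg_mem, zero_mul]
  let ρ2 : (Polynomial ℚ ⧸ Ideal.span {g}) →ₐ[ℚ] Λ ⧸ I := Ideal.Quotient.liftₐ _ ρ hker
  have hsurj2 : Function.Surjective ρ2 := by
    intro z
    obtain ⟨p, hp⟩ := hsurj z
    exact ⟨Ideal.Quotient.mk _ p, by rw [← hp]; rfl⟩
  haveI : FiniteDimensional ℚ (Polynomial ℚ ⧸ Ideal.span {g}) :=
    (AdjoinRoot.powerBasis hg).finite
  exact Module.Finite.of_surjective ρ2.toLinearMap hsurj2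

lemma fd_quot (q : Λ) (hq : q ≠ 0) : FiniteDimensional ℚ (Λ ⧸ Ideal.span {q}) := by
  obtain ⟨g, hg0, hco, hspan⟩ := exists_good_poly q hq
  rw [hspan]
  exact fd_quot_toLaurent g hg0 hco

instance : IsPrincipalIdealRing Λ := by
  constructor
  intro I
  haveI := LaurentPolynomial.isLocalization (R := ℚ)
  obtain ⟨g, hg⟩ := (IsPrincipalIdealRing.principal
    (I.comap (algebraMap (Polynomial ℚ) Λ)))
  refine ⟨algebraMap _ Λ g, ?_⟩
  rw [← IsLocalization.map_comap (Submonoid.powers (Polynomial.X : Polynomial ℚ)) Λ I, Ideal.under_def, hg]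
  simp [Ideal.map_span, Ideal.submodule_span_eq]


/-- For a finitely generated torsion Λ-module H, the Λ-module Hom_Λ(H, Q(Λ)/Λ) is
isomorphic as a ℚ-vector space to Hom_ℚ(H, ℚ). -/
theorem homQmodL_iso_qDual
    (H : Type) [AddCommGroup H] [Module Λ H] [Module.Finite Λ H]
    [Module ℚ H] [IsScalarTower ℚ Λ H]
    (htor : Module.IsTorsion Λ H) :
    Nonempty ((H →ₗ[Λ] QmodΛ) ≃ₗ[ℚ] (H →ₗ[ℚ] ℚ)) := by
  classical
  obtain ⟨ι, fι, p, hp, e, ⟨l⟩⟩ := Module.equiv_directSum_of_isTorsion (R := Λ) (M := H) htor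
  haveI := fι
  set q : ι → Λ := fun i => p i ^ e i with hqdef
  have hq : ∀ i, q i ≠ 0 := fun i => pow_ne_zero _ (hp i).ne_zero
  have l2 : H ≃ₗ[Λ] Π i, Λ ⧸ Ideal.span {q i} :=
    l.trans (DirectSum.linearEquivFunOnFintype Λ ι _)
  have eΛ : (H →ₗ[Λ] QmodΛ) ≃ₗ[Λ] H :=
    (l2.arrowCongr (LinearEquiv.refl Λ QmodΛ)).trans <|
      ((LinearMap.lsum Λ (fun i => Λ ⧸ Ideal.span {q i}) Λ).symm).trans <|
        (LinearEquiv.piCongrRight (fun i => homEquiv (q i) (hq i))).trans l2.symm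
  have eQ : (H →ₗ[Λ] QmodΛ) ≃ₗ[ℚ] H := eΛ.restrictScalars ℚ
  haveI : ∀ i, FiniteDimensional ℚ (Λ ⧸ Ideal.span {q i}) := fun i => fd_quot (q i) (hq i)
  haveI : FiniteDimensional ℚ H :=
    Module.Finite.equiv (l2.restrictScalars ℚ).symm
  have hfr : Module.finrank ℚ H = Module.finrank ℚ (H →ₗ[ℚ] ℚ) :=
    (Subspace.dual_finrank_eq (K := ℚ) (V := H)).symm
  obtain ⟨e2⟩ := FiniteDimensional.nonempty_linearEquiv_of_finrank_eq hfr
  exact ⟨eQ.trans e2⟩
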